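/- arXiv:1401.1602 — 2 statements merged into one kernel-verified Lean document; each statement's English description precedes it below -/
import Mathlib

section
/- Let n ≥ 1, let A = (a_{i,j}) be a real n×n matrix, and let f be the piecewise constant function with matrix A on the uniform n×n grid. Then the infimum over all copula measures μ of ∫_{[0,1)²} f dμ equals (1/n) · min over all permutations π of {1,…,n} of ∑_{i=1}^n a_{i,π(i)}, and this infimum is attained by the shuffle-of-M copula measure associated with a minimizing permutation. -/
open MeasureTheory Set

/-- A copula measure: a probability measure on the plane whose marginals are
Lebesgue measure restricted to `[0,1)`. -/
def IsCopulaMeasure (μ : Measure (ℝ × ℝ)) : Prop :=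
  IsProbabilityMeasure μ ∧
  μ.map Prod.fst = volume.restrict (Ico (0:ℝ) 1) ∧
  μ.map Prod.snd = volume.restrict (Ico (0:ℝ) 1)

/-- The half-open grid cell `[(i)/m, (i+1)/m) × [(j)/m, (j+1)/m)` (0-indexed). -/
def gridCell (m : ℕ) (i j : Fin m) : Set (ℝ × ℝ) :=
  Ico (((i : ℕ) : ℝ) / m) ((((i : ℕ) : ℝ) + 1) / m) ×ˢ
    Ico (((j : ℕ) : ℝ) / m) ((((j : ℕ) : ℝ) + 1) / m)

/-- The closure of the grid cell. -/
def closedCell (m : ℕ) (i j : Fin m) : Set (ℝ × ℝ) :=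
  Icc (((i : ℕ) : ℝ) / m) ((((i : ℕ) : ℝ) + 1) / m) ×ˢ
    Icc (((j : ℕ) : ℝ) / m) ((((j : ℕ) : ℝ) + 1) / m)

/-! ### Auxiliary material -/

/-- The `i`-th piece of the uniform partition of `[0,1)` into `n` intervals. -/
def piece (n : ℕ) (i : Fin n) : Set ℝ :=
  Ico (((i : ℕ) : ℝ) / n) ((((i : ℕ) : ℝ) + 1) / n)

lemma gridCell_eq (n : ℕ) (i j : Fin n) : gridCell n i j = piece n i ×ˢ piece n j := rfl

lemma piece_measurableSet {n : ℕ} (i : Fin n) : MeasurableSet (piece n i) :=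
  measurableSet_Ico

lemma gridCell_measurableSet {n : ℕ} (i j : Fin n) : MeasurableSet (gridCell n i j) :=
  measurableSet_Ico.prod measurableSet_Ico

lemma cast_pos_of_fin {n : ℕ} (i : Fin n) : (0 : ℝ) < n := by
  have := i.pos
  exact_mod_cast this

lemma piece_subset {n : ℕ} (i : Fin n) : piece n i ⊆ Ico (0:ℝ) 1 := by
  have hn0 : (0 : ℝ) < n := cast_pos_of_fin i
  intro x hx
  obtain ⟨h1, h2⟩ := hx
  have hi : ((i : ℕ) : ℝ) + 1 ≤ n := by exact_mod_cast i.isLt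
  constructor
  · have : (0:ℝ) ≤ ((i : ℕ) : ℝ) / n := by positivity
    linarith
  · calc x < (((i : ℕ) : ℝ) + 1) / n := h2
      _ ≤ (n : ℝ) / n := by gcongr
      _ = 1 := div_self hn0.ne'

lemma piece_disjoint {n : ℕ} {i j : Fin n} (h : i ≠ j) :
    Disjoint (piece n i) (piece n j) := by
  have hn0 : (0 : ℝ) < n := cast_pos_of_fin i
  rw [piece, piece, Set.Ico_disjoint_Ico]
  rcases lt_or_gt_of_ne (fun hij => h (Fin.ext hij) : (i:ℕ) ≠ (j:ℕ)) with hij | hij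
  · have hij' : ((i : ℕ) : ℝ) + 1 ≤ ((j : ℕ) : ℝ) := by exact_mod_cast hij
    have : (((i : ℕ) : ℝ) + 1) / n ≤ ((j : ℕ) : ℝ) / n := by gcongr
    exact le_trans (min_le_left _ _) (le_trans this (le_max_right _ _))
  · have hij' : ((j : ℕ) : ℝ) + 1 ≤ ((i : ℕ) : ℝ) := by exact_mod_cast hij
    have : (((j : ℕ) : ℝ) + 1) / n ≤ ((i : ℕ) : ℝ) / n := by gcongr
    exact le_trans (min_le_right _ _) (le_trans this (le_max_left _ _))

lemma mem_piece_of_mem_Ico {n : ℕ} (hn : 1 ≤ n) {x : ℝ} (hx : x ∈ Ico (0:ℝ) 1) :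
    ∃ i : Fin n, x ∈ piece n i := by
  have hn0 : (0 : ℝ) < n := by exact_mod_cast hn
  have hxn : 0 ≤ x * n := mul_nonneg hx.1 hn0.le
  have hk : ⌊x * n⌋₊ < n := by
    rw [Nat.floor_lt hxn]
    calc x * n < 1 * n := by nlinarith [hx.2]
      _ = n := one_mul _
  refine ⟨⟨⌊x * n⌋₊, hk⟩, ?_, ?_⟩
  · rw [div_le_iff₀ hn0]
    exact_mod_cast Nat.floor_le hxn
  · rw [lt_div_iff₀ hn0]
    exact_mod_cast Nat.lt_floor_add_one (x * n)

lemma iUnion_piece {n : ℕ} (hn : 1 ≤ n) : ⋃ i : Fin n, piece n i = Ico (0:ℝ) 1 := by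
  apply subset_antisymm
  · exact iUnion_subset fun i => piece_subset i
  · intro x hx
    obtain ⟨i, hi⟩ := mem_piece_of_mem_Ico hn hx
    exact mem_iUnion.2 ⟨i, hi⟩

lemma volume_piece {n : ℕ} (i : Fin n) : volume (piece n i) = ENNReal.ofReal (1 / n) := by
  rw [piece, Real.volume_Ico]
  congr 1
  ring

lemma iUnion_gridCell {n : ℕ} (hn : 1 ≤ n) :
    ⋃ i : Fin n, ⋃ j : Fin n, gridCell n i j = Ico (0:ℝ) 1 ×ˢ Ico (0:ℝ) 1 := by
  simp_rw [gridCell_eq, ← Set.prod_iUnion, ← Set.iUnion_prod_const, iUnion_piece hn]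

section Copula

variable {n : ℕ} {μ : Measure (ℝ × ℝ)}

lemma copula_fst_apply (hμ : IsCopulaMeasure μ) {s : Set ℝ} (hs : MeasurableSet s) :
    μ (s ×ˢ univ) = volume (s ∩ Ico (0:ℝ) 1) := by
  rw [Set.prod_univ, ← Measure.map_apply measurable_fst hs, hμ.2.1,
    Measure.restrict_apply hs]

lemma copula_snd_apply (hμ : IsCopulaMeasure μ) {s : Set ℝ} (hs : MeasurableSet s) :
    μ (univ ×ˢ s) = volume (s ∩ Ico (0:ℝ) 1) := by
  rw [Set.univ_prod, ← Measure.map_apply measurable_snd hs, hμ.2.2,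
    Measure.restrict_apply hs]

lemma copula_fst_piece (hμ : IsCopulaMeasure μ) (i : Fin n) :
    μ (piece n i ×ˢ univ) = ENNReal.ofReal (1 / n) := by
  rw [copula_fst_apply hμ (piece_measurableSet i),
    inter_eq_self_of_subset_left (piece_subset i), volume_piece]

lemma copula_snd_piece (hμ : IsCopulaMeasure μ) (j : Fin n) :
    μ (univ ×ˢ piece n j) = ENNReal.ofReal (1 / n) := by
  rw [copula_snd_apply hμ (piece_measurableSet j),
    inter_eq_self_of_subset_left (piece_subset j), volume_piece]

lemma copula_null_fst (hμ : IsCopulaMeasure μ) : μ ((Ico (0:ℝ) 1)ᶜ ×ˢ univ) = 0 := by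
  rw [copula_fst_apply hμ measurableSet_Ico.compl, compl_inter_self, measure_empty]

lemma copula_null_snd (hμ : IsCopulaMeasure μ) : μ (univ ×ˢ (Ico (0:ℝ) 1)ᶜ) = 0 := by
  rw [copula_snd_apply hμ measurableSet_Ico.compl, compl_inter_self, measure_empty]

lemma copula_row_sum (hn : 1 ≤ n) (hμ : IsCopulaMeasure μ) (i : Fin n) :
    ∑ j, μ (gridCell n i j) = ENNReal.ofReal (1 / n) := by
  have hdisj : Pairwise (Function.onFun Disjoint fun j : Fin n => gridCell n i j) := by
    intro j j' hjj'
    simp only [Function.onFun, gridCell_eq]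
    exact Set.disjoint_prod.2 (Or.inr (piece_disjoint hjj'))
  have h1 : μ (⋃ j : Fin n, gridCell n i j) = ∑ j, μ (gridCell n i j) := by
    rw [measure_iUnion hdisj fun j => gridCell_measurableSet i j, tsum_fintype]
  have h2 : (⋃ j : Fin n, gridCell n i j) = piece n i ×ˢ Ico (0:ℝ) 1 := by
    simp_rw [gridCell_eq, ← Set.prod_iUnion, iUnion_piece hn]
  have h3 : μ (piece n i ×ˢ Ico (0:ℝ) 1) = μ (piece n i ×ˢ univ) := by
    apply le_antisymm (measure_mono (Set.prod_mono subset_rfl (subset_univ _)))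
    calc μ (piece n i ×ˢ univ)
        = μ (piece n i ×ˢ Ico (0:ℝ) 1 ∪ piece n i ×ˢ (Ico (0:ℝ) 1)ᶜ) := by
          rw [← Set.prod_union, union_compl_self]
      _ ≤ μ (piece n i ×ˢ Ico (0:ℝ) 1) + μ (piece n i ×ˢ (Ico (0:ℝ) 1)ᶜ) :=
          measure_union_le _ _
      _ = μ (piece n i ×ˢ Ico (0:ℝ) 1) := by
          rw [measure_mono_null (Set.prod_mono (subset_univ _) subset_rfl)
            (copula_null_snd hμ), add_zero]
  rw [← h1, h2, h3, copula_fst_piece hμ]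

lemma copula_col_sum (hn : 1 ≤ n) (hμ : IsCopulaMeasure μ) (j : Fin n) :
    ∑ i, μ (gridCell n i j) = ENNReal.ofReal (1 / n) := by
  have hdisj : Pairwise (Function.onFun Disjoint fun i : Fin n => gridCell n i j) := by
    intro i i' hii'
    simp only [Function.onFun, gridCell_eq]
    exact Set.disjoint_prod.2 (Or.inl (piece_disjoint hii'))
  have h1 : μ (⋃ i : Fin n, gridCell n i j) = ∑ i, μ (gridCell n i j) := by
    rw [measure_iUnion hdisj fun i => gridCell_measurableSet i j, tsum_fintype]
  have h2 : (⋃ i : Fin n, gridCell n i j) = Ico (0:ℝ) 1 ×ˢ piece n j := by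
    simp_rw [gridCell_eq, ← Set.iUnion_prod_const, iUnion_piece hn]
  have h3 : μ (Ico (0:ℝ) 1 ×ˢ piece n j) = μ (univ ×ˢ piece n j) := by
    apply le_antisymm (measure_mono (Set.prod_mono (subset_univ _) subset_rfl))
    calc μ (univ ×ˢ piece n j)
        = μ (Ico (0:ℝ) 1 ×ˢ piece n j ∪ (Ico (0:ℝ) 1)ᶜ ×ˢ piece n j) := by
          rw [← Set.union_prod, union_compl_self]
      _ ≤ μ (Ico (0:ℝ) 1 ×ˢ piece n j) + μ ((Ico (0:ℝ) 1)ᶜ ×ˢ piece n j) :=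
          measure_union_le _ _
      _ = μ (Ico (0:ℝ) 1 ×ˢ piece n j) := by
          rw [measure_mono_null (Set.prod_mono subset_rfl (subset_univ _))
            (copula_null_fst hμ), add_zero]
  rw [← h1, h2, h3, copula_snd_piece hμ]

lemma cells_ae_cover (hn : 1 ≤ n) (hμ : IsCopulaMeasure μ) :
    μ ((⋃ i : Fin n, ⋃ j : Fin n, gridCell n i j)ᶜ) = 0 := by
  rw [iUnion_gridCell hn]
  refine measure_mono_null (fun p hp => ?_)
    (measure_union_null (copula_null_fst hμ) (copula_null_snd hμ))
  simp only [mem_compl_iff, Set.mem_prod, not_and] at hp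
  by_cases h1 : p.1 ∈ Ico (0:ℝ) 1
  · exact Or.inr ⟨mem_univ _, hp h1⟩
  · exact Or.inl ⟨h1, mem_univ _⟩

end Copula

section IntegralFormula

variable {n : ℕ} {a : Fin n → Fin n → ℝ} {f : ℝ × ℝ → ℝ}

lemma integral_piecewise_const (hn : 1 ≤ n)
    (hf : ∀ i j : Fin n, ∀ p ∈ gridCell n i j, f p = a i j)
    (μ : Measure (ℝ × ℝ)) [IsProbabilityMeasure μ]
    (hcov : μ ((⋃ i : Fin n, ⋃ j : Fin n, gridCell n i j)ᶜ) = 0) :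
    ∫ p, f p ∂μ = ∑ i, ∑ j, a i j * (μ (gridCell n i j)).toReal := by
  have hFf : ∀ p ∈ ⋃ i : Fin n, ⋃ j : Fin n, gridCell n i j,
      f p = ∑ i, ∑ j, (gridCell n i j).indicator (fun _ => a i j) p := by
    intro p hp
    simp only [mem_iUnion] at hp
    obtain ⟨i, j, hpij⟩ := hp
    have : (∑ i, ∑ j, (gridCell n i j).indicator (fun _ => a i j) p) = a i j := by
      rw [Finset.sum_eq_single i]
      · rw [Finset.sum_eq_single j]
        · exact Set.indicator_of_mem hpij _
        · intro j' _ hj'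
          apply Set.indicator_of_notMem
          intro hpij'
          exact (piece_disjoint hj').ne_of_mem hpij'.2 hpij.2 rfl
        · intro h; exact absurd (Finset.mem_univ j) h
      · intro i' _ hi'
        apply Finset.sum_eq_zero
        intro j' _
        apply Set.indicator_of_notMem
        intro hpij'
        exact (piece_disjoint hi').ne_of_mem hpij'.1 hpij.1 rfl
      · intro h; exact absurd (Finset.mem_univ i) h
    rw [this, hf i j p hpij]
  have hae : f =ᵐ[μ] fun p => ∑ i, ∑ j, (gridCell n i j).indicator (fun _ => a i j) p := by
    rw [Filter.eventuallyEq_iff_exists_mem]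
    refine ⟨⋃ i : Fin n, ⋃ j : Fin n, gridCell n i j, ?_, hFf⟩
    rw [mem_ae_iff]
    exact hcov
  rw [integral_congr_ae hae]
  rw [integral_finset_sum]
  · congr 1
    ext i
    rw [integral_finset_sum]
    · congr 1
      ext j
      rw [integral_indicator_const _ (gridCell_measurableSet i j), smul_eq_mul, mul_comm]
      rfl
    · intro j _
      exact (integrable_const (a i j)).indicator (gridCell_measurableSet i j)
  · intro i _
    apply integrable_finset_sum
    intro j _
    exact (integrable_const (a i j)).indicator (gridCell_measurableSet i j)

end IntegralFormula

section LowerBound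

variable {n : ℕ}

lemma perm_entry_sum (a : Fin n → Fin n → ℝ) (σ : Equiv.Perm (Fin n)) (i : Fin n) :
    ∑ j, a i j * (σ.permMatrix ℝ) i j = a i (σ i) := by
  have : ∀ j, (σ.permMatrix ℝ) i j = if σ i = j then 1 else 0 := by
    intro j
    simp [Equiv.Perm.permMatrix, PEquiv.toMatrix_apply, Equiv.toPEquiv_apply,
      Option.mem_def]
  simp_rw [this, mul_ite, mul_one, mul_zero]
  simp

lemma copula_lower_bound (hn : 1 ≤ n) {a : Fin n → Fin n → ℝ} {f : ℝ × ℝ → ℝ}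
    (hf : ∀ i j : Fin n, ∀ p ∈ gridCell n i j, f p = a i j)
    {μ : Measure (ℝ × ℝ)} (hμ : IsCopulaMeasure μ) :
    (1 / n : ℝ) * (⨅ π : Equiv.Perm (Fin n), ∑ i, a i (π i)) ≤ ∫ p, f p ∂μ := by
  have hn0 : (0 : ℝ) < n := by exact_mod_cast hn
  haveI : IsProbabilityMeasure μ := hμ.1
  set c : ℝ := ⨅ π : Equiv.Perm (Fin n), ∑ i, a i (π i) with hc
  haveI : Nonempty (Equiv.Perm (Fin n)) := ⟨1⟩
  have hbdd : BddBelow (Set.range fun π : Equiv.Perm (Fin n) => ∑ i, a i (π i)) :=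
    Set.Finite.bddBelow (Set.finite_range _)
  set M : Matrix (Fin n) (Fin n) ℝ := fun i j => n * (μ (gridCell n i j)).toReal with hM
  have hcell_ne_top : ∀ i j : Fin n, μ (gridCell n i j) ≠ ⊤ :=
    fun i j => (measure_lt_top μ _).ne
  have hMds : M ∈ doublyStochastic ℝ (Fin n) := by
    rw [mem_doublyStochastic_iff_sum]
    refine ⟨fun i j => by positivity, ?_, ?_⟩
    · intro i
      rw [hM]
      simp only
      rw [← Finset.mul_sum, ← ENNReal.toReal_sum fun j _ => hcell_ne_top i j,
        copula_row_sum hn hμ, ENNReal.toReal_ofReal (by positivity)]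
      field_simp
    · intro j
      rw [hM]
      simp only
      rw [← Finset.mul_sum, ← ENNReal.toReal_sum fun i _ => hcell_ne_top i j,
        copula_col_sum hn hμ, ENNReal.toReal_ofReal (by positivity)]
      field_simp
  obtain ⟨w, hw0, hw1, hwM⟩ := exists_eq_sum_perm_of_mem_doublyStochastic hMds
  have hMij : ∀ i j, M i j = ∑ σ : Equiv.Perm (Fin n), w σ * (σ.permMatrix ℝ) i j := by
    intro i j
    rw [← hwM]
    simp [Finset.sum_apply, Matrix.sum_apply]
  have hL : ∑ i, ∑ j, a i j * M i j = ∑ σ : Equiv.Perm (Fin n), w σ * ∑ i, a i (σ i) := by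
    have e1 : ∀ σ : Equiv.Perm (Fin n), w σ * ∑ i, a i (σ i)
        = ∑ i, ∑ j, a i j * (w σ * (σ.permMatrix ℝ) i j) := by
      intro σ
      rw [Finset.mul_sum]
      refine Finset.sum_congr rfl fun i _ => ?_
      rw [← perm_entry_sum a σ i, Finset.mul_sum]
      refine Finset.sum_congr rfl fun j _ => ?_
      ring
    simp_rw [e1, hMij, Finset.mul_sum]
    rw [show (∑ σ : Equiv.Perm (Fin n), ∑ i, ∑ j, a i j * (w σ * (σ.permMatrix ℝ) i j))
        = ∑ i, ∑ σ : Equiv.Perm (Fin n), ∑ j, a i j * (w σ * (σ.permMatrix ℝ) i j) from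
      Finset.sum_comm]
    exact Finset.sum_congr rfl fun i _ => Finset.sum_comm
  have hcle : c ≤ ∑ i, ∑ j, a i j * M i j := by
    rw [hL]
    calc c = (∑ σ : Equiv.Perm (Fin n), w σ) * c := by rw [hw1, one_mul]
      _ = ∑ σ : Equiv.Perm (Fin n), w σ * c := by rw [Finset.sum_mul]
      _ ≤ ∑ σ : Equiv.Perm (Fin n), w σ * ∑ i, a i (σ i) := by
          apply Finset.sum_le_sum
          intro σ _
          exact mul_le_mul_of_nonneg_left (ciInf_le hbdd σ) (hw0 σ)
  have hint : ∫ p, f p ∂μ = (1 / n : ℝ) * ∑ i, ∑ j, a i j * M i j := by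
    rw [integral_piecewise_const hn hf μ (cells_ae_cover hn hμ)]
    rw [Finset.mul_sum]
    congr 1
    ext i
    rw [Finset.mul_sum]
    congr 1
    ext j
    rw [hM]
    simp only
    field_simp
  rw [hint]
  exact mul_le_mul_of_nonneg_left hcle (by positivity)

end LowerBound


section Shuffle

variable {n : ℕ}

/-- The integer-indexed shift amounts of a shuffle. -/
noncomputable def shift (n : ℕ) (π : Equiv.Perm (Fin n)) : ℤ → ℝ := fun k =>
  if h : 0 ≤ k ∧ k < n then
    ((((π ⟨k.toNat, by omega⟩ : Fin n) : ℕ) : ℝ) - (k.toNat : ℝ)) / n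
  else 0

/-- The shuffle map associated with a permutation. -/
noncomputable def shuffleT (n : ℕ) (π : Equiv.Perm (Fin n)) : ℝ → ℝ := fun x =>
  x + shift n π ⌊x * n⌋

lemma measurable_shuffleT {π : Equiv.Perm (Fin n)} : Measurable (shuffleT n π) := by
  have h1 : Measurable fun x : ℝ => shift n π ⌊x * (n : ℝ)⌋ :=
    (measurable_of_countable (shift n π)).comp
      (Int.measurable_floor.comp (measurable_id.mul_const ((n : ℕ) : ℝ)))
  exact measurable_id.add h1

lemma floor_eq_of_mem_piece {i : Fin n} {x : ℝ} (hx : x ∈ piece n i) :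
    ⌊x * n⌋ = ((i : ℕ) : ℤ) := by
  have hn0 : (0 : ℝ) < n := cast_pos_of_fin i
  rw [Int.floor_eq_iff]
  obtain ⟨h1, h2⟩ := hx
  constructor
  · push_cast
    rw [div_le_iff₀ hn0] at h1
    linarith
  · push_cast
    rw [lt_div_iff₀ hn0] at h2
    linarith

lemma shuffleT_eq (π : Equiv.Perm (Fin n)) (i : Fin n) {x : ℝ} (hx : x ∈ piece n i) :
    shuffleT n π x = x + ((((π i : ℕ) : ℝ)) - ((i : ℕ) : ℝ)) / n := by
  have hn0 : (0 : ℝ) < n := cast_pos_of_fin i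
  rw [shuffleT, floor_eq_of_mem_piece hx, shift]
  rw [dif_pos ⟨Int.natCast_nonneg _, by exact_mod_cast i.isLt⟩]
  simp [Int.toNat_natCast]

lemma shuffleT_mem_piece (π : Equiv.Perm (Fin n)) (i : Fin n) {x : ℝ}
    (hx : x ∈ piece n i) : shuffleT n π x ∈ piece n (π i) := by
  rw [shuffleT_eq π i hx]
  obtain ⟨h1, h2⟩ := hx
  have e1 : (((π i : ℕ) : ℝ)) / n
      = ((i : ℕ) : ℝ) / n + ((((π i : ℕ) : ℝ)) - ((i : ℕ) : ℝ)) / n := by ring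
  have e2 : ((((π i : ℕ) : ℝ)) + 1) / n
      = (((i : ℕ) : ℝ) + 1) / n + ((((π i : ℕ) : ℝ)) - ((i : ℕ) : ℝ)) / n := by ring
  constructor
  · rw [e1]; linarith
  · rw [e2]; linarith

lemma map_shuffleT (hn : 1 ≤ n) (π : Equiv.Perm (Fin n)) :
    (volume.restrict (Ico (0:ℝ) 1)).map (shuffleT n π)
      = volume.restrict (Ico (0:ℝ) 1) := by
  have hT : Measurable (shuffleT n π) := measurable_shuffleT
  have hdisj : Pairwise (Function.onFun Disjoint fun i : Fin n => piece n i) :=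
    fun i j hij => piece_disjoint hij
  have key : ∀ i : Fin n, (volume.restrict (piece n i)).map (shuffleT n π)
      = volume.restrict (piece n (π i)) := by
    intro i
    have h1 : (volume.restrict (piece n i)).map (shuffleT n π)
        = (volume.restrict (piece n i)).map
          (fun x => x + ((((π i : ℕ) : ℝ)) - ((i : ℕ) : ℝ)) / n) := by
      apply Measure.map_congr
      exact (ae_restrict_mem (piece_measurableSet i)).mono fun x hx => shuffleT_eq π i hx
    have h2 : (fun x => x + ((((π i : ℕ) : ℝ)) - ((i : ℕ) : ℝ)) / n) ⁻¹'
        (piece n (π i)) = piece n i := by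
      rw [piece, piece, preimage_add_const_Ico]
      congr 1 <;> ring
    rw [h1]
    calc (volume.restrict (piece n i)).map
          (fun x => x + ((((π i : ℕ) : ℝ)) - ((i : ℕ) : ℝ)) / n)
        = (volume.restrict ((fun x => x + ((((π i : ℕ) : ℝ)) - ((i : ℕ) : ℝ)) / n) ⁻¹'
            (piece n (π i)))).map
            (fun x => x + ((((π i : ℕ) : ℝ)) - ((i : ℕ) : ℝ)) / n) := by rw [h2]
      _ = (volume.map (fun x => x + ((((π i : ℕ) : ℝ)) - ((i : ℕ) : ℝ)) / n)).restrict
            (piece n (π i)) :=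
          (Measure.restrict_map (measurable_add_const _) (piece_measurableSet _)).symm
      _ = volume.restrict (piece n (π i)) := by
          rw [map_add_right_eq_self volume _]
  conv_lhs => rw [← iUnion_piece hn,
    Measure.restrict_iUnion hdisj fun i => piece_measurableSet i]
  rw [Measure.map_sum hT.aemeasurable]
  simp_rw [key]
  rw [Measure.sum_fintype]
  rw [Equiv.sum_comp π (fun j => volume.restrict (piece n j))]
  rw [← Measure.sum_fintype, ← Measure.restrict_iUnion hdisj fun i => piece_measurableSet i,
    iUnion_piece hn]

lemma shuffle_isCopula (hn : 1 ≤ n) (π : Equiv.Perm (Fin n)) :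
    IsCopulaMeasure ((volume.restrict (Ico (0:ℝ) 1)).map (fun x => (x, shuffleT n π x))) := by
  have hg : Measurable (fun x => (x, shuffleT n π x)) :=
    measurable_id.prodMk measurable_shuffleT
  refine ⟨⟨?_⟩, ?_, ?_⟩
  · rw [Measure.map_apply hg MeasurableSet.univ]
    simp [Real.volume_Ico]
  · rw [Measure.map_map measurable_fst hg]
    exact Measure.map_id
  · rw [Measure.map_map measurable_snd hg]
    exact map_shuffleT hn π

lemma shuffle_cell_measure (π : Equiv.Perm (Fin n)) (i j : Fin n) :
    ((volume.restrict (Ico (0:ℝ) 1)).map (fun x => (x, shuffleT n π x))) (gridCell n i j)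
      = if j = π i then ENNReal.ofReal (1 / n) else 0 := by
  have hg : Measurable (fun x => (x, shuffleT n π x)) :=
    measurable_id.prodMk measurable_shuffleT
  rw [Measure.map_apply hg (gridCell_measurableSet i j)]
  have hpre : (fun x => (x, shuffleT n π x)) ⁻¹' gridCell n i j
      = if j = π i then piece n i else ∅ := by
    ext x
    simp only [mem_preimage, gridCell_eq, Set.mem_prod]
    split_ifs with h
    · subst h
      exact ⟨fun hx => hx.1, fun hx => ⟨hx, shuffleT_mem_piece π i hx⟩⟩
    · simp only [mem_empty_iff_false, iff_false, not_and]
      intro h1 h2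
      exact absurd rfl ((piece_disjoint h).ne_of_mem h2 (shuffleT_mem_piece π i h1))
  rw [hpre]
  split_ifs
  · rw [Measure.restrict_apply (piece_measurableSet i),
      inter_eq_self_of_subset_left (piece_subset i), volume_piece]
  · simp

end Shuffle

theorem stmt_7 (n : ℕ) (hn : 1 ≤ n) (a : Fin n → Fin n → ℝ) (f : ℝ × ℝ → ℝ)
    (hf : ∀ i j : Fin n, ∀ p ∈ gridCell n i j, f p = a i j) :
    IsLeast {x : ℝ | ∃ μ : Measure (ℝ × ℝ), IsCopulaMeasure μ ∧ x = ∫ p, f p ∂μ}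
      ((1 / n : ℝ) * ⨅ π : Equiv.Perm (Fin n), ∑ i, a i (π i)) ∧
    ∃ (π' : Equiv.Perm (Fin n)) (T : ℝ → ℝ), Measurable T ∧
      (∀ i : Fin n, ∀ x ∈ Ico (((i : ℕ) : ℝ) / n) ((((i : ℕ) : ℝ) + 1) / n),
        T x = x + (((π' i : ℕ) : ℝ) - ((i : ℕ) : ℝ)) / n) ∧
      (∑ i, a i (π' i) = ⨅ π : Equiv.Perm (Fin n), ∑ i, a i (π i)) ∧
      ∫ p, f p ∂((volume.restrict (Ico (0:ℝ) 1)).map (fun x => (x, T x))) =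
        (1 / n : ℝ) * ⨅ π : Equiv.Perm (Fin n), ∑ i, a i (π i) := by
  have hn0 : (0 : ℝ) < n := by exact_mod_cast hn
  obtain ⟨π', hπ'⟩ := Finite.exists_min fun π : Equiv.Perm (Fin n) => ∑ i, a i (π i)
  have hbdd : BddBelow (Set.range fun π : Equiv.Perm (Fin n) => ∑ i, a i (π i)) :=
    Set.Finite.bddBelow (Set.finite_range _)
  have hcinf : (∑ i, a i (π' i)) = ⨅ π : Equiv.Perm (Fin n), ∑ i, a i (π i) :=
    le_antisymm (le_ciInf hπ') (ciInf_le hbdd π')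
  have hcop := shuffle_isCopula hn π'
  haveI : IsProbabilityMeasure
      ((volume.restrict (Ico (0:ℝ) 1)).map (fun x => (x, shuffleT n π' x))) := hcop.1
  have hint : ∫ p, f p ∂((volume.restrict (Ico (0:ℝ) 1)).map
      (fun x => (x, shuffleT n π' x)))
      = (1 / n : ℝ) * ⨅ π : Equiv.Perm (Fin n), ∑ i, a i (π i) := by
    rw [integral_piecewise_const hn hf _ (cells_ae_cover hn hcop)]
    simp_rw [shuffle_cell_measure π']
    have hrow : ∀ i : Fin n,
        ∑ j, a i j * ((if j = π' i then ENNReal.ofReal (1 / n) else 0 : ENNReal)).toReal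
          = a i (π' i) * (1 / n : ℝ) := by
      intro i
      rw [Finset.sum_eq_single (π' i)]
      · rw [if_pos rfl, ENNReal.toReal_ofReal (by positivity)]
      · intro j _ hj
        rw [if_neg hj]
        simp
      · intro h; exact absurd (Finset.mem_univ _) h
    simp_rw [hrow]
    rw [← Finset.sum_mul, hcinf]
    ring
  constructor
  · constructor
    · exact ⟨_, hcop, hint.symm⟩
    · rintro x ⟨μ, hμ, rfl⟩
      exact copula_lower_bound hn hf hμ
  · exact ⟨π', shuffleT n π', measurable_shuffleT,
      fun i x hx => shuffleT_eq π' i hx, hcinf, hint⟩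
end

section
/- Let f be a continuous real-valued function on [0,1]², and for n ≥ 1 let f̲_n and f̄_n be its dyadic lower and upper approximations on the uniform 2^n × 2^n grid. Then, as n → ∞, both sup over copula measures μ of ∫_{[0,1)²} f̲_n dμ and sup over copula measures μ of ∫_{[0,1)²} f̄_n dμ converge to sup over copula measures μ of ∫_{[0,1)²} f dμ. -/
open MeasureTheory Set

/-! ### Auxiliary lemmas -/

section Aux

open Filter

lemma copula_ae {μ : Measure (ℝ × ℝ)} (h : IsCopulaMeasure μ) :
    ∀ᵐ p ∂μ, p ∈ Ico (0:ℝ) 1 ×ˢ Ico (0:ℝ) 1 := by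
  have h1 : μ (Prod.fst ⁻¹' (Ico (0:ℝ) 1)ᶜ) = 0 := by
    rw [← Measure.map_apply measurable_fst measurableSet_Ico.compl, h.2.1,
      Measure.restrict_apply measurableSet_Ico.compl]
    simp
  have h2 : μ (Prod.snd ⁻¹' (Ico (0:ℝ) 1)ᶜ) = 0 := by
    rw [← Measure.map_apply measurable_snd measurableSet_Ico.compl, h.2.2,
      Measure.restrict_apply measurableSet_Ico.compl]
    simp
  rw [MeasureTheory.ae_iff]
  refine measure_mono_null ?_ (measure_union_null h1 h2)
  intro p hp
  simp only [mem_setOf_eq, mem_prod, not_and_or] at hp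
  exact hp.imp (fun h => h) (fun h => h)

lemma exists_copula : ∃ μ : Measure (ℝ × ℝ), IsCopulaMeasure μ := by
  set ν := volume.restrict (Ico (0:ℝ) 1) with hν
  haveI hνp : IsProbabilityMeasure ν := ⟨by simp [hν, Real.volume_Ico]⟩
  refine ⟨ν.prod ν, inferInstance, ?_, ?_⟩
  · rw [Measure.map_fst_prod]; simp [hν]
  · rw [Measure.map_snd_prod]; simp [hν]

lemma exists_fin_Ico {m : ℕ} (hm : 0 < m) {x : ℝ} (hx : x ∈ Ico (0:ℝ) 1) :
    ∃ i : Fin m, x ∈ Ico (((i : ℕ) : ℝ) / m) ((((i : ℕ) : ℝ) + 1) / m) := by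
  have hm' : (0:ℝ) < m := by exact_mod_cast hm
  have h0 : (0:ℝ) ≤ x * m := mul_nonneg hx.1 hm'.le
  have h1 : x * m < m := by nlinarith [hx.2, hm']
  have hfl0 : 0 ≤ ⌊x * m⌋ := Int.floor_nonneg.mpr h0
  have hflt : ⌊x * m⌋ < (m : ℤ) := Int.floor_lt.mpr (by exact_mod_cast h1)
  have hlt : ⌊x * m⌋.toNat < m := by omega
  have hcast : ((⌊x * m⌋.toNat : ℕ) : ℝ) = ((⌊x * m⌋ : ℤ) : ℝ) := by
    exact_mod_cast congrArg (Int.cast : ℤ → ℝ) (Int.toNat_of_nonneg hfl0)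
  refine ⟨⟨⌊x * m⌋.toNat, hlt⟩, ?_, ?_⟩
  · show ((⌊x * m⌋.toNat : ℕ) : ℝ) / m ≤ x
    rw [hcast, div_le_iff₀ hm']
    exact Int.floor_le (x * m)
  · show x < (((⌊x * m⌋.toNat : ℕ) : ℝ) + 1) / m
    rw [hcast, lt_div_iff₀ hm']
    exact Int.lt_floor_add_one (x * m)

lemma fin_Ico_unique {m : ℕ} {x : ℝ} {i i' : Fin m}
    (h : x ∈ Ico (((i : ℕ) : ℝ) / m) ((((i : ℕ) : ℝ) + 1) / m))
    (h' : x ∈ Ico (((i' : ℕ) : ℝ) / m) ((((i' : ℕ) : ℝ) + 1) / m)) : i = i' := by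
  have hm' : (0:ℝ) < m := by exact_mod_cast i.pos
  have h1 : ((i : ℕ) : ℝ) / m < (((i' : ℕ) : ℝ) + 1) / m := lt_of_le_of_lt h.1 h'.2
  have h2 : ((i' : ℕ) : ℝ) / m < (((i : ℕ) : ℝ) + 1) / m := lt_of_le_of_lt h'.1 h.2
  rw [div_lt_div_iff₀ hm' hm'] at h1 h2
  have h1' : ((i : ℕ) : ℝ) < ((i' : ℕ) : ℝ) + 1 := by nlinarith
  have h2' : ((i' : ℕ) : ℝ) < ((i : ℕ) : ℝ) + 1 := by nlinarith
  have a1 : (i : ℕ) < (i' : ℕ) + 1 := by exact_mod_cast h1'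
  have a2 : (i' : ℕ) < (i : ℕ) + 1 := by exact_mod_cast h2'
  exact Fin.ext (by omega)

lemma gridCell_subset {m : ℕ} (i j : Fin m) : gridCell m i j ⊆ closedCell m i j :=
  Set.prod_mono Ico_subset_Icc_self Ico_subset_Icc_self

lemma closedCell_subset_unit {m : ℕ} (i j : Fin m) :
    closedCell m i j ⊆ Icc (0:ℝ) 1 ×ˢ Icc (0:ℝ) 1 := by
  have hm' : (0:ℝ) < m := by exact_mod_cast i.pos
  apply Set.prod_mono <;> apply Icc_subset_Icc <;>
    first
    | positivity
    | · rw [div_le_one hm']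
        push_cast
        first
        | exact_mod_cast Nat.succ_le_of_lt i.isLt
        | exact_mod_cast Nat.succ_le_of_lt j.isLt

lemma closedCell_dist {m : ℕ} {i j : Fin m} {p q : ℝ × ℝ}
    (hp : p ∈ closedCell m i j) (hq : q ∈ closedCell m i j) : dist p q ≤ 1 / m := by
  rw [Prod.dist_eq]
  have h1 : dist p.1 q.1 ≤ 1 / m := by
    have h := Real.dist_le_of_mem_Icc hp.1 hq.1
    calc dist p.1 q.1 ≤ (((i : ℕ) : ℝ) + 1) / m - ((i : ℕ) : ℝ) / m := h
    _ = 1 / m := by ring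
  have h2 : dist p.2 q.2 ≤ 1 / m := by
    have h := Real.dist_le_of_mem_Icc hp.2 hq.2
    calc dist p.2 q.2 ≤ (((j : ℕ) : ℝ) + 1) / m - ((j : ℕ) : ℝ) / m := h
    _ = 1 / m := by ring
  exact max_le h1 h2

lemma measurableSet_gridCell {m : ℕ} (i j : Fin m) : MeasurableSet (gridCell m i j) :=
  measurableSet_Ico.prod measurableSet_Ico

/-- The canonical piecewise-constant function built from cell values. -/
noncomputable def cellSum (n : ℕ) (c : Fin (2 ^ n) → Fin (2 ^ n) → ℝ) : ℝ × ℝ → ℝ :=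
  fun p => ∑ i : Fin (2 ^ n), ∑ j : Fin (2 ^ n),
    (gridCell (2 ^ n) i j).indicator (fun _ => c i j) p

lemma cellSum_integrable {n : ℕ} (c : Fin (2 ^ n) → Fin (2 ^ n) → ℝ)
    (μ : Measure (ℝ × ℝ)) [IsFiniteMeasure μ] : Integrable (cellSum n c) μ := by
  apply integrable_finset_sum
  intro i _
  apply integrable_finset_sum
  intro j _
  exact (integrable_const _).indicator (measurableSet_gridCell i j)

lemma cellSum_eq {n : ℕ} (c : Fin (2 ^ n) → Fin (2 ^ n) → ℝ) {p : ℝ × ℝ}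
    {i j : Fin (2 ^ n)} (hp : p ∈ gridCell (2 ^ n) i j) : cellSum n c p = c i j := by
  unfold cellSum
  rw [Finset.sum_eq_single i, Finset.sum_eq_single j]
  · exact indicator_of_mem hp _
  · intro j' _ hj'
    apply indicator_of_notMem
    intro hmem
    exact hj' (fin_Ico_unique hmem.2 hp.2)
  · intro h; exact absurd (Finset.mem_univ j) h
  · intro i' _ hi'
    apply Finset.sum_eq_zero
    intro j' _
    apply indicator_of_notMem
    intro hmem
    exact hi' (fin_Ico_unique hmem.1 hp.1)
  · intro h; exact absurd (Finset.mem_univ i) h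

lemma aux_tendsto (f : ℝ × ℝ → ℝ)
    (hf : ContinuousOn f (Icc (0:ℝ) 1 ×ˢ Icc (0:ℝ) 1))
    (g : ℕ → ℝ × ℝ → ℝ)
    (H : ∀ n : ℕ, 1 ≤ n → ∃ c : Fin (2 ^ n) → Fin (2 ^ n) → ℝ,
      ∀ i j : Fin (2 ^ n), c i j ∈ f '' closedCell (2 ^ n) i j ∧
        ∀ p ∈ gridCell (2 ^ n) i j, g n p = c i j) :
    Tendsto
      (fun n : ℕ => sSup {x : ℝ | ∃ μ : Measure (ℝ × ℝ), IsCopulaMeasure μ ∧ x = ∫ p, g n p ∂μ})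
      atTop
      (nhds (sSup {x : ℝ | ∃ μ : Measure (ℝ × ℝ), IsCopulaMeasure μ ∧ x = ∫ p, f p ∂μ})) := by
  set K : Set (ℝ × ℝ) := Icc (0:ℝ) 1 ×ˢ Icc (0:ℝ) 1 with hKdef
  have hK : IsCompact K := isCompact_Icc.prod isCompact_Icc
  have hsK : Ico (0:ℝ) 1 ×ˢ Ico (0:ℝ) 1 ⊆ K :=
    Set.prod_mono Ico_subset_Icc_self Ico_subset_Icc_self
  obtain ⟨M, hM⟩ := hK.exists_bound_of_continuousOn hf
  have huc := Metric.uniformContinuousOn_iff.mp (hK.uniformContinuousOn_of_continuous hf)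
  -- basic facts about f for an arbitrary copula measure
  have hfint : ∀ μ : Measure (ℝ × ℝ), IsCopulaMeasure μ →
      Integrable f μ ∧ (∀ᵐ p ∂μ, ‖f p‖ ≤ M) := by
    intro μ hμ
    haveI := hμ.1
    have hae := copula_ae hμ
    have hrestr : μ.restrict K = μ :=
      Measure.restrict_eq_self_of_ae_mem (hae.mono fun p hp => hsK hp)
    have hfm : AEStronglyMeasurable f μ := by
      rw [← hrestr]
      exact hf.aestronglyMeasurable (measurableSet_Icc.prod measurableSet_Icc)
    have hbd : ∀ᵐ p ∂μ, ‖f p‖ ≤ M := hae.mono fun p hp => hM p (hsK hp)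
    exact ⟨(integrable_const M).mono' hfm hbd, hbd⟩
  rw [Metric.tendsto_atTop]
  intro ε hε
  obtain ⟨δ, hδ, hδε⟩ := huc (ε / 2) (by linarith)
  obtain ⟨N₀, hN₀⟩ := pow_unbounded_of_one_lt (1 / δ : ℝ) (by norm_num : (1:ℝ) < 2)
  refine ⟨max 1 N₀, fun n hn => ?_⟩
  have hn1 : 1 ≤ n := le_trans (le_max_left _ _) hn
  have hm : 0 < 2 ^ n := by positivity
  have hsmall : (1:ℝ) / 2 ^ n < δ := by
    have h2 : (1 / δ : ℝ) < 2 ^ n :=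
      lt_of_lt_of_le hN₀ (pow_le_pow_right₀ (by norm_num) (le_trans (le_max_right _ _) hn))
    rw [div_lt_iff₀ hδ] at h2
    rw [div_lt_iff₀ (by positivity : (0:ℝ) < 2 ^ n)]
    linarith
  obtain ⟨c, hc⟩ := H n hn1
  -- per-measure facts about g n
  have hgfacts : ∀ μ : Measure (ℝ × ℝ), IsCopulaMeasure μ →
      Integrable (g n) μ ∧ (∀ᵐ p ∂μ, ‖g n p‖ ≤ M) ∧
      (∀ᵐ p ∂μ, ‖g n p - f p‖ ≤ ε / 2) := by
    intro μ hμ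
    haveI := hμ.1
    have hae := copula_ae hμ
    have haecell : ∀ᵐ p ∂μ, ∃ i j : Fin (2 ^ n), p ∈ gridCell (2 ^ n) i j := by
      filter_upwards [hae] with p hp
      obtain ⟨i, hi⟩ := exists_fin_Ico hm hp.1
      obtain ⟨j, hj⟩ := exists_fin_Ico hm hp.2
      exact ⟨i, j, hi, hj⟩
    have haeeq : g n =ᵐ[μ] cellSum n c := by
      filter_upwards [haecell] with p hp
      obtain ⟨i, j, hij⟩ := hp
      rw [(hc i j).2 p hij, cellSum_eq c hij]
    have hgint : Integrable (g n) μ := (cellSum_integrable c μ).congr haeeq.symm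
    have hgbd : ∀ᵐ p ∂μ, ‖g n p‖ ≤ M := by
      filter_upwards [haecell] with p hp
      obtain ⟨i, j, hij⟩ := hp
      obtain ⟨q, hq, hfq⟩ := (hc i j).1
      rw [(hc i j).2 p hij, ← hfq]
      exact hM q (closedCell_subset_unit i j hq)
    have hclose : ∀ᵐ p ∂μ, ‖g n p - f p‖ ≤ ε / 2 := by
      filter_upwards [haecell] with p hp
      obtain ⟨i, j, hij⟩ := hp
      obtain ⟨q, hq, hfq⟩ := (hc i j).1
      have hpcell : p ∈ closedCell (2 ^ n) i j := gridCell_subset i j hij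
      have hdist : dist q p < δ := by
        have := closedCell_dist hq hpcell
        calc dist q p ≤ 1 / (2 ^ n : ℕ) := this
        _ = 1 / (2 : ℝ) ^ n := by push_cast; ring
        _ < δ := hsmall
      have := hδε q (closedCell_subset_unit i j hq) p (closedCell_subset_unit i j hpcell) hdist
      rw [(hc i j).2 p hij, ← hfq]
      rw [Real.dist_eq] at this
      exact le_of_lt (by simpa [Real.norm_eq_abs] using this)
    exact ⟨hgint, hgbd, hclose⟩
  -- the key integral estimate
  have hkey : ∀ μ : Measure (ℝ × ℝ), IsCopulaMeasure μ →
      |(∫ p, g n p ∂μ) - ∫ p, f p ∂μ| ≤ ε / 2 := by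
    intro μ hμ
    haveI := hμ.1
    obtain ⟨hgint, _, hclose⟩ := hgfacts μ hμ
    obtain ⟨hfi, _⟩ := hfint μ hμ
    have := norm_integral_le_of_norm_le_const (μ := μ)
      (f := fun p => g n p - f p) hclose
    rw [integral_sub hgint hfi] at this
    simpa [Real.norm_eq_abs, measure_univ] using this
  -- sSup bounds
  set T := {x : ℝ | ∃ μ : Measure (ℝ × ℝ), IsCopulaMeasure μ ∧ x = ∫ p, f p ∂μ} with hTdef
  set A := {x : ℝ | ∃ μ : Measure (ℝ × ℝ), IsCopulaMeasure μ ∧ x = ∫ p, g n p ∂μ} with hAdef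
  obtain ⟨μ₀, hμ₀⟩ := exists_copula
  have hTne : T.Nonempty := ⟨_, μ₀, hμ₀, rfl⟩
  have hAne : A.Nonempty := ⟨_, μ₀, hμ₀, rfl⟩
  have hTbdd : BddAbove T := by
    refine ⟨M, fun x hx => ?_⟩
    obtain ⟨μ, hμ, rfl⟩ := hx
    haveI := hμ.1
    have := norm_integral_le_of_norm_le_const (μ := μ) (hfint μ hμ).2
    simp only [probReal_univ, mul_one] at this
    exact le_trans (le_abs_self _) (by simpa [Real.norm_eq_abs] using this)
  have hAbdd : BddAbove A := by
    refine ⟨M, fun x hx => ?_⟩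
    obtain ⟨μ, hμ, rfl⟩ := hx
    haveI := hμ.1
    have := norm_integral_le_of_norm_le_const (μ := μ) (hgfacts μ hμ).2.1
    simp only [probReal_univ, mul_one] at this
    exact le_trans (le_abs_self _) (by simpa [Real.norm_eq_abs] using this)
  have h1 : sSup A ≤ sSup T + ε / 2 := by
    apply csSup_le hAne
    rintro x ⟨μ, hμ, rfl⟩
    have hk := hkey μ hμ
    have hmem : (∫ p, f p ∂μ) ∈ T := ⟨μ, hμ, rfl⟩
    have := le_csSup hTbdd hmem
    rw [abs_sub_le_iff] at hk
    linarith [hk.1]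
  have h2 : sSup T ≤ sSup A + ε / 2 := by
    apply csSup_le hTne
    rintro x ⟨μ, hμ, rfl⟩
    have hk := hkey μ hμ
    have hmem : (∫ p, g n p ∂μ) ∈ A := ⟨μ, hμ, rfl⟩
    have := le_csSup hAbdd hmem
    rw [abs_sub_le_iff] at hk
    linarith [hk.2]
  rw [Real.dist_eq, abs_sub_lt_iff]
  constructor <;> linarith

end Aux

theorem stmt_10 (f : ℝ × ℝ → ℝ) (hf : ContinuousOn f (Icc (0:ℝ) 1 ×ˢ Icc (0:ℝ) 1))
    (fl fu : ℕ → ℝ × ℝ → ℝ)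
    (hfl : ∀ n : ℕ, 1 ≤ n → ∀ i j : Fin (2 ^ n), ∀ p ∈ gridCell (2 ^ n) i j,
      IsLeast (f '' closedCell (2 ^ n) i j) (fl n p))
    (hfu : ∀ n : ℕ, 1 ≤ n → ∀ i j : Fin (2 ^ n), ∀ p ∈ gridCell (2 ^ n) i j,
      IsGreatest (f '' closedCell (2 ^ n) i j) (fu n p)) :
    Filter.Tendsto
      (fun n : ℕ => sSup {x : ℝ | ∃ μ : Measure (ℝ × ℝ), IsCopulaMeasure μ ∧ x = ∫ p, fl n p ∂μ})
      Filter.atTop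
      (nhds (sSup {x : ℝ | ∃ μ : Measure (ℝ × ℝ), IsCopulaMeasure μ ∧ x = ∫ p, f p ∂μ})) ∧
    Filter.Tendsto
      (fun n : ℕ => sSup {x : ℝ | ∃ μ : Measure (ℝ × ℝ), IsCopulaMeasure μ ∧ x = ∫ p, fu n p ∂μ})
      Filter.atTop
      (nhds (sSup {x : ℝ | ∃ μ : Measure (ℝ × ℝ), IsCopulaMeasure μ ∧ x = ∫ p, f p ∂μ})) := by
  have hbase : ∀ (n : ℕ) (i j : Fin (2 ^ n)),
      (((i : ℕ) : ℝ) / (2 ^ n : ℕ), ((j : ℕ) : ℝ) / (2 ^ n : ℕ)) ∈ gridCell (2 ^ n) i j := by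
    intro n i j
    have hm : (0:ℝ) < (2 ^ n : ℕ) := by positivity
    constructor <;> exact ⟨le_refl _, by rw [div_lt_div_iff₀ hm hm]; nlinarith⟩
  constructor
  · apply aux_tendsto f hf
    intro n hn
    refine ⟨fun i j => fl n (((i : ℕ) : ℝ) / (2 ^ n : ℕ), ((j : ℕ) : ℝ) / (2 ^ n : ℕ)),
      fun i j => ⟨?_, fun p hp => ?_⟩⟩
    · exact (hfl n hn i j _ (hbase n i j)).1
    · exact IsLeast.unique (hfl n hn i j p hp) (hfl n hn i j _ (hbase n i j))
  · apply aux_tendsto f hf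
    intro n hn
    refine ⟨fun i j => fu n (((i : ℕ) : ℝ) / (2 ^ n : ℕ), ((j : ℕ) : ℝ) / (2 ^ n : ℕ)),
      fun i j => ⟨?_, fun p hp => ?_⟩⟩
    · exact (hfu n hn i j _ (hbase n i j)).1
    · exact IsGreatest.unique (hfu n hn i j p hp) (hfu n hn i j _ (hbase n i j))
end
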